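/- Let D > 0, let N be a positive integer, and set x_j = −1 + (2j−1)/N for j = 1,…,N. With G(x,z) = |x−z|/(2D) − (1/(2D))(1/3 + x²/2 + z²/2), for every k ∈ {1,…,N} one has Σ_{j=1}^{N} G(x_k, x_j) = −1/(6DN). -/

import Mathlib

open Real

/-- The Neumann Green's function with zero average for `D d²/dx² + 1/2` on `(−1,1)`. -/
noncomputable def G (D x z : ℝ) : ℝ :=
  |x - z| / (2 * D) - (1 / (2 * D)) * (1/3 + x^2/2 + z^2/2)

lemma sum_id_real (n : ℕ) : ∑ j ∈ Finset.range n, (j : ℝ) = n * (n - 1) / 2 := by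
  induction n with
  | zero => simp
  | succ m ih =>
    rw [Finset.sum_range_succ, ih]
    push_cast
    ring

lemma sum_sq_real (n : ℕ) :
    ∑ j ∈ Finset.range n, (j : ℝ)^2 = n * (n - 1) * (2 * n - 1) / 6 := by
  induction n with
  | zero => simp
  | succ m ih =>
    rw [Finset.sum_range_succ, ih]
    push_cast
    ring

lemma sum_abs_real (K n : ℕ) (h : K < n) :
    ∑ j ∈ Finset.range n, |(K : ℝ) - (j : ℝ)| =
      ((K : ℝ)^2 + K + ((n : ℝ) - 1 - K) * ((n : ℝ) - K)) / 2 := by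
  induction n, h using Nat.le_induction with
  | base =>
    have h1 : ∀ j ∈ Finset.range (K + 1), |(K : ℝ) - (j : ℝ)| = (K : ℝ) - (j : ℝ) := by
      intro j hj
      rw [Finset.mem_range] at hj
      have : (j : ℝ) ≤ (K : ℝ) := by exact_mod_cast Nat.lt_succ_iff.mp hj
      exact abs_of_nonneg (by linarith)
    rw [Finset.sum_congr rfl h1, Finset.sum_sub_distrib, Finset.sum_const, sum_id_real]
    simp
    ring
  | succ m hm ih =>
    rw [Finset.sum_range_succ, ih]
    have : |(K : ℝ) - (m : ℝ)| = (m : ℝ) - (K : ℝ) := by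
      have : (K : ℝ) ≤ (m : ℝ) := by exact_mod_cast Nat.le_of_succ_le hm
      rw [abs_sub_comm]
      exact abs_of_nonneg (by linarith)
    rw [this]
    push_cast
    ring

/-- At the symmetric spike positions `x_j = −1 + (2j−1)/N`, the Green's function
row sums are constant: `Σ_j G(x_k, x_j) = −1/(6DN)`. -/
theorem stmt_9 (D : ℝ) (hD : 0 < D) (N : ℕ) (hN : 0 < N)
    (x : Fin N → ℝ) (hx : ∀ j : Fin N, x j = -1 + (2 * (j : ℝ) + 1) / N) :
    ∀ k : Fin N, (∑ j : Fin N, G D (x k) (x j)) = -1 / (6 * D * N) := by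
  intro k
  have hNr : (0 : ℝ) < (N : ℝ) := by exact_mod_cast hN
  have hNne : (N : ℝ) ≠ 0 := ne_of_gt hNr
  have hDne : D ≠ 0 := ne_of_gt hD
  set Kr : ℝ := ((k : ℕ) : ℝ) with hKr
  -- rewrite each term
  have key : ∀ j : Fin N, G D (x k) (x j) =
      (1 / (D * N)) * |Kr - ((j : ℕ) : ℝ)|
      - (1 / (2 * D)) * (1/3 + (-1 + (2 * Kr + 1) / N)^2 / 2
          + (-1 + (2 * ((j : ℕ) : ℝ) + 1) / N)^2 / 2) := by
    intro j
    rw [hx k, hx j]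
    unfold G
    have hdiff : (-1 + (2 * Kr + 1) / N) - (-1 + (2 * ((j : ℕ) : ℝ) + 1) / N)
        = 2 * (Kr - ((j : ℕ) : ℝ)) / N := by
      field_simp
      ring
    rw [hdiff, abs_div, abs_mul, abs_of_pos hNr]
    rw [show |(2 : ℝ)| = 2 by norm_num]
    field_simp
    ring
  rw [Finset.sum_congr rfl (fun j _ => key j)]
  rw [Fin.sum_univ_eq_sum_range (fun i : ℕ =>
      (1 / (D * N)) * |Kr - (i : ℝ)|
      - (1 / (2 * D)) * (1/3 + (-1 + (2 * Kr + 1) / N)^2 / 2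
          + (-1 + (2 * (i : ℝ) + 1) / N)^2 / 2)) N]
  rw [Finset.sum_sub_distrib, ← Finset.mul_sum, ← Finset.mul_sum]
  rw [sum_abs_real (k : ℕ) N k.isLt]
  have hquad : ∀ i ∈ Finset.range N,
      (1/3 + (-1 + (2 * Kr + 1) / N)^2 / 2 + (-1 + (2 * (i : ℝ) + 1) / N)^2 / 2)
      = (1/3 + (-1 + (2 * Kr + 1) / N)^2 / 2 + 1/2 - 1/(N : ℝ) + 1/(2 * (N : ℝ)^2))
        + (-2/(N : ℝ) + 2/(N : ℝ)^2) * (i : ℝ) + (2/(N : ℝ)^2) * (i : ℝ)^2 := by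
    intro i _
    field_simp
    ring
  rw [Finset.sum_congr rfl hquad]
  rw [Finset.sum_add_distrib, Finset.sum_add_distrib, Finset.sum_const,
    ← Finset.mul_sum, ← Finset.mul_sum, sum_id_real, sum_sq_real]
  simp only [nsmul_eq_mul, Finset.card_range, ← hKr]
  field_simp
  ring
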